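/- Let μ₀ be the density of N(0,σ²), μ₁ the density of N(1,σ²), and μ = (1−q)μ₀ + qμ₁ for q ∈ (0,1). Then E_{z∼μ}[((μ₀(z) − μ(z))/μ(z))²] ≤ (q²/(1−q))·(exp(1/σ²) − 1). -/

import Mathlib

open MeasureTheory Real

/-- Density of the Gaussian `N(m, σ²)` on `ℝ`. -/
noncomputable def gaussianDensity (σ m z : ℝ) : ℝ :=
  (1 / (σ * Real.sqrt (2 * Real.pi))) * Real.exp (-((z - m) ^ 2) / (2 * σ ^ 2))

lemma gaussianDensity_pos (σ m z : ℝ) (hσ : 0 < σ) : 0 < gaussianDensity σ m z := by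
  have h : 0 < Real.sqrt (2 * Real.pi) := Real.sqrt_pos.2 (by positivity)
  unfold gaussianDensity
  positivity

lemma gaussianDensity_eq_pdf (σ m : ℝ) (hσ : 0 < σ) :
    gaussianDensity σ m = ProbabilityTheory.gaussianPDFReal m ⟨σ ^ 2, sq_nonneg σ⟩ := by
  ext z
  unfold gaussianDensity ProbabilityTheory.gaussianPDFReal
  have h2 : Real.sqrt (2 * Real.pi * σ ^ 2) = σ * Real.sqrt (2 * Real.pi) := by
    rw [mul_comm (2 * Real.pi), Real.sqrt_mul (sq_nonneg σ), Real.sqrt_sq hσ.le]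
  simp only [NNReal.coe_mk, h2, one_div, neg_div]
  change _ = (Real.sqrt (2 * Real.pi * σ ^ 2))⁻¹ * Real.exp (-((z - m) ^ 2 / (2 * σ ^ 2)))
  rw [h2]

lemma gaussianDensity_integrable (σ m : ℝ) (hσ : 0 < σ) :
    Integrable (gaussianDensity σ m) := by
  rw [gaussianDensity_eq_pdf σ m hσ]
  exact ProbabilityTheory.integrable_gaussianPDFReal m _

lemma gaussianDensity_integral (σ m : ℝ) (hσ : 0 < σ) :
    ∫ z : ℝ, gaussianDensity σ m z = 1 := by
  rw [gaussianDensity_eq_pdf σ m hσ]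
  exact ProbabilityTheory.integral_gaussianPDFReal_eq_one m
    (by intro h; have := congrArg (fun x : NNReal => (x : ℝ)) h; exact (pow_pos hσ 2).ne' this)

lemma gaussianDensity_continuous (σ m : ℝ) : Continuous (gaussianDensity σ m) := by
  unfold gaussianDensity
  fun_prop

/-- Key pointwise identity: `μ₁² / μ₀ = exp(1/σ²) · μ₂`. -/
lemma gaussianDensity_sq_div (σ z : ℝ) (hσ : 0 < σ) :
    gaussianDensity σ 1 z ^ 2 / gaussianDensity σ 0 z
      = Real.exp (1 / σ ^ 2) * gaussianDensity σ 2 z := by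
  have h : 0 < Real.sqrt (2 * Real.pi) := Real.sqrt_pos.2 (by positivity)
  unfold gaussianDensity
  rw [div_eq_iff (by positivity)]
  have key : Real.exp (-((z - 1) ^ 2) / (2 * σ ^ 2)) ^ 2
      = Real.exp (1 / σ ^ 2) * Real.exp (-((z - 2) ^ 2) / (2 * σ ^ 2))
        * Real.exp (-((z - 0) ^ 2) / (2 * σ ^ 2)) := by
    rw [sq, ← Real.exp_add, ← Real.exp_add, ← Real.exp_add]
    congr 1
    field_simp
    ring
  rw [mul_pow, key]
  ring

/-- Second-moment bound for the mixture `μ = (1−q)μ₀ + qμ₁`: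
`E_{z∼μ}[((μ₀ − μ)/μ)²] ≤ (q²/(1−q))·(exp(1/σ²) − 1)`. -/
theorem mixture_second_moment_bound (σ q : ℝ) (hσ : 0 < σ) (hq0 : 0 < q) (hq1 : q < 1) :
    ∫ z : ℝ,
        ((1 - q) * gaussianDensity σ 0 z + q * gaussianDensity σ 1 z) *
          ((gaussianDensity σ 0 z -
              ((1 - q) * gaussianDensity σ 0 z + q * gaussianDensity σ 1 z)) /
            ((1 - q) * gaussianDensity σ 0 z + q * gaussianDensity σ 1 z)) ^ 2
      ≤ q ^ 2 / (1 - q) * (Real.exp (1 / σ ^ 2) - 1) := by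
  have hq1' : 0 < 1 - q := by linarith
  set f : ℝ → ℝ := fun z =>
    ((1 - q) * gaussianDensity σ 0 z + q * gaussianDensity σ 1 z) *
      ((gaussianDensity σ 0 z -
          ((1 - q) * gaussianDensity σ 0 z + q * gaussianDensity σ 1 z)) /
        ((1 - q) * gaussianDensity σ 0 z + q * gaussianDensity σ 1 z)) ^ 2 with hf
  set g : ℝ → ℝ := fun z =>
    q ^ 2 / (1 - q) * (gaussianDensity σ 0 z - 2 * gaussianDensity σ 1 z
      + Real.exp (1 / σ ^ 2) * gaussianDensity σ 2 z) with hg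
  have hμpos : ∀ z, 0 < (1 - q) * gaussianDensity σ 0 z + q * gaussianDensity σ 1 z := by
    intro z
    have h0 := gaussianDensity_pos σ 0 z hσ
    have h1 := gaussianDensity_pos σ 1 z hσ
    nlinarith
  -- pointwise inequality f ≤ g
  have hle : ∀ z, f z ≤ g z := by
    intro z
    have h0 := gaussianDensity_pos σ 0 z hσ
    have h1 := gaussianDensity_pos σ 1 z hσ
    have hμ := hμpos z
    set a := gaussianDensity σ 0 z
    set b := gaussianDensity σ 1 z
    set μ := (1 - q) * a + q * b with hμdef
    have hfz : f z = q ^ 2 * (a - b) ^ 2 / μ := by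
      simp only [hf]
      rw [← hμdef]
      field_simp
      ring
    have step1 : q ^ 2 * (a - b) ^ 2 / μ ≤ q ^ 2 * (a - b) ^ 2 / ((1 - q) * a) :=
      div_le_div_of_nonneg_left (by positivity) (by positivity) (by nlinarith)
    have step2 : q ^ 2 * (a - b) ^ 2 / ((1 - q) * a) = g z := by
      simp only [hg]
      rw [← gaussianDensity_sq_div σ z hσ]
      show q ^ 2 * (a - b) ^ 2 / ((1 - q) * a) = q ^ 2 / (1 - q) * (a - 2 * b + b ^ 2 / a)
      field_simp
      ring
    rw [hfz, ← step2]
    exact step1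
  have hfnonneg : ∀ z, 0 ≤ f z := by
    intro z
    exact mul_nonneg (hμpos z).le (sq_nonneg _)
  -- integrability
  have hg_int : Integrable g := by
    apply Integrable.const_mul
    exact ((gaussianDensity_integrable σ 0 hσ).sub
      ((gaussianDensity_integrable σ 1 hσ).const_mul 2)).add
      ((gaussianDensity_integrable σ 2 hσ).const_mul _)
  have hf_cont : Continuous f := by
    have c0 := gaussianDensity_continuous σ 0
    have c1 := gaussianDensity_continuous σ 1
    have cμ : Continuous fun z => (1 - q) * gaussianDensity σ 0 z
        + q * gaussianDensity σ 1 z := by fun_prop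
    exact cμ.mul (((c0.sub cμ).div cμ fun z => (hμpos z).ne').pow 2)
  have hf_int : Integrable f := by
    refine hg_int.mono' hf_cont.aestronglyMeasurable (Filter.Eventually.of_forall fun z => ?_)
    rw [Real.norm_eq_abs, abs_of_nonneg (hfnonneg z)]
    exact hle z
  have hI : ∫ z : ℝ, f z ≤ ∫ z : ℝ, g z := integral_mono hf_int hg_int hle
  have hgI : ∫ z : ℝ, g z = q ^ 2 / (1 - q) * (Real.exp (1 / σ ^ 2) - 1) := by
    simp only [hg]
    rw [integral_const_mul]
    have i0 : Integrable (fun z : ℝ => gaussianDensity σ 0 z) := gaussianDensity_integrable σ 0 hσ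
    have i1 : Integrable (fun z : ℝ => 2 * gaussianDensity σ 1 z) :=
      (gaussianDensity_integrable σ 1 hσ).const_mul 2
    have i2 : Integrable (fun z : ℝ => Real.exp (1 / σ ^ 2) * gaussianDensity σ 2 z) :=
      (gaussianDensity_integrable σ 2 hσ).const_mul _
    have isub : Integrable (fun z : ℝ => gaussianDensity σ 0 z - 2 * gaussianDensity σ 1 z) :=
      i0.sub i1
    rw [integral_add isub i2, integral_sub i0 i1]
    rw [integral_const_mul, integral_const_mul,
      gaussianDensity_integral σ 0 hσ, gaussianDensity_integral σ 1 hσ,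
      gaussianDensity_integral σ 2 hσ]
    ring
  calc ∫ z : ℝ, f z ≤ ∫ z : ℝ, g z := hI
    _ = _ := hgI
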